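/- Under the same backward recursion, the accumulated difference satisfies: if c_j := b_j − b_r with c_r = 0 and b_{j−1} = b_j − α_j H_jᵀ b_j, then ‖b_0 − b_r‖ ≤ L₁ L₂ Σ_{j=1}^r α_j Π_{j'=j}^r (1 + α_{j'} L₂). -/

import Mathlib

open Finset

lemma prod_telescope (r : ℕ) (f : ℕ → ℝ) (hf : ∀ k, 0 ≤ f k) :
    ∀ d, d ≤ r + 1 →
      (∏ k ∈ Finset.Icc (r + 1 - d) r, (1 + f k)) - 1 ≤
        ∑ j ∈ Finset.Icc (r + 1 - d) r, f j * ∏ k ∈ Finset.Icc j r, (1 + f k) := by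
  intro d
  induction d with
  | zero => simp
  | succ d ih =>
    intro hd
    have hdr : d ≤ r := Nat.lt_succ_iff.mp hd
    have hm : r + 1 - (d + 1) = r - d := by omega
    have hm1 : r + 1 - d = (r - d) + 1 := by omega
    set m := r - d with hmdef
    have hmr : m ≤ r := by omega
    have hins : insert m (Finset.Icc (m + 1) r) = Finset.Icc m r :=
      Finset.insert_Icc_add_one_left_eq_Icc hmr
    have hnot : m ∉ Finset.Icc (m + 1) r := by simp
    have hprodpos : (0:ℝ) ≤ ∏ k ∈ Finset.Icc (m+1) r, (1 + f k) :=
      Finset.prod_nonneg (fun k _ => by have := hf k; linarith)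
    have ihm := ih (by omega)
    rw [hm1] at ihm
    rw [hm, ← hins, Finset.prod_insert hnot, Finset.sum_insert hnot]
    have key : (1 + f m) * ∏ k ∈ Finset.Icc (m+1) r, (1 + f k) - 1
        = f m * ∏ k ∈ Finset.Icc (m+1) r, (1 + f k)
          + ((∏ k ∈ Finset.Icc (m+1) r, (1 + f k)) - 1) := by ring
    rw [key]
    have h1 : f m * ∏ k ∈ Finset.Icc (m+1) r, (1 + f k)
        ≤ f m * ∏ k ∈ Finset.Icc m r, (1 + f k) := by
      apply mul_le_mul_of_nonneg_left _ (hf m)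
      rw [← hins, Finset.prod_insert hnot]
      nlinarith [hf m]
    linarith


/-- The drift of the fully back-propagated adjoint from the last-step
gradient satisfies ‖b_0 − b_r‖ ≤ L₁ L₂ Σ_{j=1}^r α_j Π_{j'=j}^r (1 + α_{j'} L₂). -/
theorem adjoint_backprop_drift_bound {p : ℕ} (r : ℕ) (L₁ L₂ : ℝ)
    (hL₁ : 0 < L₁) (hL₂ : 0 < L₂)
    (α : ℕ → ℝ) (hα : ∀ j, 0 < α j)
    (H : ℕ → EuclideanSpace ℝ (Fin p) →L[ℝ] EuclideanSpace ℝ (Fin p))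
    (hH : ∀ j, ‖H j‖ ≤ L₂)
    (b : ℕ → EuclideanSpace ℝ (Fin p))
    (hbr : ‖b r‖ ≤ L₁)
    (hrec : ∀ j, 1 ≤ j → j ≤ r →
      b (j - 1) = b j - α j • (ContinuousLinearMap.adjoint (H j)) (b j)) :
    ‖b 0 - b r‖ ≤ L₁ * L₂ * ∑ j ∈ Finset.Icc 1 r, α j * ∏ j' ∈ Finset.Icc j r, (1 + α j' * L₂) := by
  -- Step 1: ‖b (r - d) - b r‖ ≤ L₁ * (∏ k in Icc (r-d+1) r, (1 + α k * L₂) - 1)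
  have main : ∀ d, d ≤ r →
      ‖b (r - d) - b r‖ ≤ L₁ * ((∏ k ∈ Finset.Icc (r - d + 1) r, (1 + α k * L₂)) - 1) := by
    intro d
    induction d with
    | zero => simp
    | succ d ih =>
      intro hd
      have hdr : d ≤ r := by omega
      set j := r - d with hjdef
      have hj1 : 1 ≤ j := by omega
      have hjr : j ≤ r := by omega
      have hstep : r - (d + 1) = j - 1 := by omega
      have hstep2 : r - (d + 1) + 1 = j := by omega
      rw [hstep2, hstep, hrec j hj1 hjr]
      have hins : insert j (Finset.Icc (j + 1) r) = Finset.Icc j r :=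
        Finset.insert_Icc_add_one_left_eq_Icc hjr
      have hnot : j ∉ Finset.Icc (j + 1) r := by simp
      have hprodpos : (0:ℝ) ≤ ∏ k ∈ Finset.Icc (j+1) r, (1 + α k * L₂) :=
        Finset.prod_nonneg (fun k _ => by nlinarith [(hα k).le, hL₂.le])
      have ihd := ih hdr
      rw [hjdef] at ihd ⊢
      -- triangle inequality
      have hnb : ‖b j‖ ≤ ‖b j - b r‖ + L₁ := by
        calc ‖b j‖ = ‖(b j - b r) + b r‖ := by rw [sub_add_cancel]
        _ ≤ ‖b j - b r‖ + ‖b r‖ := norm_add_le _ _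
        _ ≤ ‖b j - b r‖ + L₁ := by linarith
      have hadj : ‖(ContinuousLinearMap.adjoint (H j)) (b j)‖ ≤ L₂ * ‖b j‖ := by
        calc ‖(ContinuousLinearMap.adjoint (H j)) (b j)‖
            ≤ ‖ContinuousLinearMap.adjoint (H j)‖ * ‖b j‖ :=
              ContinuousLinearMap.le_opNorm _ _
        _ ≤ L₂ * ‖b j‖ := by
            apply mul_le_mul_of_nonneg_right _ (norm_nonneg _)
            rw [LinearIsometryEquiv.norm_map]
            exact hH j
      have htri : ‖(b j - α j • (ContinuousLinearMap.adjoint (H j)) (b j)) - b r‖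
          ≤ ‖b j - b r‖ + α j * (L₂ * ‖b j‖) := by
        have : (b j - α j • (ContinuousLinearMap.adjoint (H j)) (b j)) - b r
            = (b j - b r) - α j • (ContinuousLinearMap.adjoint (H j)) (b j) := by abel
        rw [this]
        calc ‖(b j - b r) - α j • (ContinuousLinearMap.adjoint (H j)) (b j)‖
            ≤ ‖b j - b r‖ + ‖α j • (ContinuousLinearMap.adjoint (H j)) (b j)‖ :=
              norm_sub_le _ _
        _ ≤ ‖b j - b r‖ + α j * (L₂ * ‖b j‖) := by
            rw [norm_smul, Real.norm_eq_abs, abs_of_pos (hα j)]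
            exact add_le_add_right (mul_le_mul_of_nonneg_left hadj (hα j).le) _
      have hP : ∏ k ∈ Finset.Icc j r, (1 + α k * L₂)
          = (1 + α j * L₂) * ∏ k ∈ Finset.Icc (j+1) r, (1 + α k * L₂) := by
        rw [← hins, Finset.prod_insert hnot]
      calc ‖(b j - α j • (ContinuousLinearMap.adjoint (H j)) (b j)) - b r‖
          ≤ ‖b j - b r‖ + α j * (L₂ * ‖b j‖) := htri
      _ ≤ ‖b j - b r‖ + α j * (L₂ * (‖b j - b r‖ + L₁)) := by
          have := mul_le_mul_of_nonneg_left hnb hL₂.le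
          nlinarith [(hα j).le]
      _ = (1 + α j * L₂) * ‖b j - b r‖ + α j * L₂ * L₁ := by ring
      _ ≤ (1 + α j * L₂) * (L₁ * ((∏ k ∈ Finset.Icc (j+1) r, (1 + α k * L₂)) - 1))
            + α j * L₂ * L₁ := by
          have hpos : (0:ℝ) ≤ 1 + α j * L₂ := by nlinarith [(hα j).le, hL₂.le]
          have := mul_le_mul_of_nonneg_left ihd hpos
          -- note: Icc (r - d + 1) = Icc (j + 1)
          have hjd : r - d + 1 = j + 1 := by omega
          rw [hjd] at this
          linarith
      _ = L₁ * ((∏ k ∈ Finset.Icc j r, (1 + α k * L₂)) - 1) := by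
          rw [hP]; ring
  have h0 : ‖b 0 - b r‖ ≤ L₁ * ((∏ k ∈ Finset.Icc 1 r, (1 + α k * L₂)) - 1) := by
    have := main r le_rfl
    simpa using this
  have htel := prod_telescope r (fun k => α k * L₂)
      (fun k => mul_nonneg (hα k).le hL₂.le) r (by omega)
  have h1 : r + 1 - r = 1 := by omega
  rw [h1] at htel
  calc ‖b 0 - b r‖ ≤ L₁ * ((∏ k ∈ Finset.Icc 1 r, (1 + α k * L₂)) - 1) := h0
  _ ≤ L₁ * ∑ j ∈ Finset.Icc 1 r, (α j * L₂) * ∏ k ∈ Finset.Icc j r, (1 + α k * L₂) :=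
      mul_le_mul_of_nonneg_left htel hL₁.le
  _ = L₁ * L₂ * ∑ j ∈ Finset.Icc 1 r, α j * ∏ j' ∈ Finset.Icc j r, (1 + α j' * L₂) := by
      rw [Finset.mul_sum, Finset.mul_sum]
      exact Finset.sum_congr rfl (fun j _ => by ring)
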